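/- Let ρ : (1/2)ℤ → {a, b, a⁻¹, b⁻¹} be a labelling, i.e. ρ(k) ∈ {a, a⁻¹} for k ∈ ℤ and ρ(k) ∈ {b, b⁻¹} for k ∈ (1/2)ℤ \ ℤ. Then for every permissible word w₁⋯w_m (m odd, w_i ∈ {a,a⁻¹} for odd i and w_i ∈ {b,b⁻¹} for even i) there exists a quasi-periodic labelling ρ and a block X ⊆ (1/2)ℤ such that the word read off along X equals w₁⋯w_m. -/

import Mathlib

/-- The four-letter alphabet `{a, b, a⁻¹, b⁻¹}`. -/
inductive Letter : Type
  | a : Letter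
  | ainv : Letter
  | b : Letter
  | binv : Letter

/-- Formal inverse of a letter. -/
def Letter.inv : Letter → Letter
  | .a => .ainv
  | .ainv => .a
  | .b => .binv
  | .binv => .b

/-- A labelling of `½ℤ` (modelled by `ℤ` after rescaling by 2): `a`-letters on even
integers (corresponding to `ℤ`), `b`-letters on odd integers (corresponding to
`½ℤ \ ℤ`). -/
def IsLabelling (ρ : ℤ → Letter) : Prop :=
  ∀ k : ℤ, (Even k → ρ k = Letter.a ∨ ρ k = Letter.ainv) ∧
    (Odd k → ρ k = Letter.b ∨ ρ k = Letter.binv)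

/-- A labelling is quasi-periodic if (1) for every block the word it reads occurs
as a subword of the word read along any sufficiently long block, and (2) the formal
inverse of the word along any block is realized along some block. -/
def QuasiPeriodic (ρ : ℤ → Letter) : Prop :=
  IsLabelling ρ ∧
  (∀ (k : ℤ) (l : ℕ), ∃ n : ℕ, ∀ (k' : ℤ) (m : ℕ), n ≤ m →
      ∃ j : ℤ, k' ≤ j ∧ j + l ≤ k' + m - 1 ∧ ∀ i : ℕ, i ≤ l → ρ (j + i) = ρ (k + i)) ∧
  (∀ (k : ℤ) (l : ℕ), ∃ j : ℤ, ∀ i : ℕ, i ≤ l →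
      ρ (j + i) = (ρ (k + ((l - i : ℕ) : ℤ))).inv)

namespace QPProof

@[simp] lemma inv_inv (c : Letter) : c.inv.inv = c := by cases c <;> rfl

def g (u : List Letter) (i : ℕ) : Letter := u.getD i Letter.a

lemma g_eq_getElem {u : List Letter} {i : ℕ} (h : i < u.length) : g u i = u[i] :=
  List.getD_eq_getElem u Letter.a h

lemma g_append_left {u v : List Letter} {i : ℕ} (h : i < u.length) : g (u ++ v) i = g u i := by
  rw [g_eq_getElem (by simp; omega), g_eq_getElem h, List.getElem_append_left]

lemma g_append_right (u v : List Letter) (j : ℕ) : g (u ++ v) (u.length + j) = g v j := by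
  unfold g
  rw [List.getD_eq_getElem?_getD, List.getD_eq_getElem?_getD,
    List.getElem?_append_right (by omega), Nat.add_sub_cancel_left]

@[simp] lemma g_cons_zero (c : Letter) (u : List Letter) : g (c :: u) 0 = c := rfl
@[simp] lemma g_cons_succ (c : Letter) (u : List Letter) (j : ℕ) : g (c :: u) (j+1) = g u j := rfl

def invrev (u : List Letter) : List Letter := (u.map Letter.inv).reverse

@[simp] lemma invrev_length (u : List Letter) : (invrev u).length = u.length := by
  simp [invrev]

lemma invrev_append (u v : List Letter) : invrev (u ++ v) = invrev v ++ invrev u := by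
  simp [invrev]

@[simp] lemma invrev_cons (c : Letter) (u : List Letter) :
    invrev (c :: u) = invrev u ++ [c.inv] := by simp [invrev]

@[simp] lemma invrev_nil : invrev [] = [] := rfl

@[simp] lemma invrev_invrev (u : List Letter) : invrev (invrev u) = u := by
  simp [invrev, List.map_reverse, List.map_map, Function.comp_def]

lemma g_invrev {u : List Letter} {i : ℕ} (h : i < u.length) :
    g (invrev u) i = (g u (u.length - 1 - i)).inv := by
  rw [g_eq_getElem (by simpa using h), g_eq_getElem (by omega)]
  simp [invrev, List.getElem_reverse, List.getElem_map]


section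
variable (w : ℕ → Letter) (m : ℕ)

def A : ℕ → List Letter
  | 0 => (List.range m).map w
  | n+1 => A n ++ Letter.b :: (invrev (A n) ++ Letter.binv :: A n)

def L (n : ℕ) : ℕ := (A w m n).length

lemma L_zero : L w m 0 = m := by simp [L, A]

lemma L_succ (n : ℕ) : L w m (n+1) = 3 * L w m n + 2 := by
  simp [L, A]; ring

lemma invrev_A_succ (n : ℕ) : invrev (A w m (n+1)) =
    invrev (A w m n) ++ Letter.b :: (A w m n ++ Letter.binv :: invrev (A w m n)) := by
  show invrev (A w m n ++ Letter.b :: (invrev (A w m n) ++ Letter.binv :: A w m n)) = _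
  simp [invrev_append, invrev_cons]
  exact ⟨rfl, rfl⟩

lemma L_mono {n M : ℕ} (h : n ≤ M) : L w m n ≤ L w m M := by
  induction M with
  | zero =>
    have : n = 0 := by omega
    subst this; exact le_rfl
  | succ M ih =>
    rcases Nat.eq_or_lt_of_le h with rfl | h'
    · rfl
    · have := ih (by omega)
      rw [L_succ]; omega

lemma L_ge (hm1 : 1 ≤ m) (n : ℕ) : n + 1 ≤ L w m n := by
  induction n with
  | zero => rw [L_zero]; omega
  | succ n ih => rw [L_succ]; omega

lemma L_odd (hm : Odd m) (n : ℕ) : Odd (L w m n) := by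
  induction n with
  | zero => rw [L_zero]; exact hm
  | succ n ih => rw [L_succ]; rcases ih with ⟨t, ht⟩; exact ⟨3*t+2, by omega⟩

lemma L_dvd {n M : ℕ} (h : n ≤ M) : ∃ k, 0 < k ∧ L w m M + 1 = k * (L w m n + 1) := by
  induction M with
  | zero =>
    have : n = 0 := by omega
    subst this; exact ⟨1, by omega, by omega⟩
  | succ M ih =>
    rcases Nat.eq_or_lt_of_le h with rfl | h'
    · exact ⟨1, by omega, by omega⟩
    · obtain ⟨k, hk0, hk⟩ := ih (by omega)
      refine ⟨3*k, by omega, ?_⟩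
      have h3 : 3 * (L w m M + 1) = 3*k*(L w m n + 1) := by rw [hk]; ring
      rw [L_succ]; omega

lemma gA_stable {n M : ℕ} (h : n ≤ M) {i : ℕ} (hi : i < L w m n) :
    g (A w m M) i = g (A w m n) i := by
  induction M with
  | zero =>
    have : n = 0 := by omega
    subst this; rfl
  | succ M ih =>
    rcases Nat.eq_or_lt_of_le h with rfl | h'
    · rfl
    · rw [← ih (by omega)]
      show g (A w m M ++ _) i = _
      exact g_append_left (by have := L_mono w m (show n ≤ M by omega); unfold L at *; omega)

/-- The key alignment step inside one level of the construction. -/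
lemma seg_step (X Y : List Letter) (LM D k q : ℕ) (hX : X.length = LM) (hY : Y.length = LM)
    (hD : 0 < D) (hk : LM + 1 = k * D) (hq : (q+1) * D ≤ 3 * (LM + 1)) :
    (∃ q', (q'+1) * D ≤ LM + 1 ∧ ∀ i, i + 2 ≤ D →
        g (X ++ Letter.b :: (Y ++ Letter.binv :: X)) (q*D+i) = g X (q'*D+i)) ∨
    (∃ q', (q'+1) * D ≤ LM + 1 ∧ ∀ i, i + 2 ≤ D →
        g (X ++ Letter.b :: (Y ++ Letter.binv :: X)) (q*D+i) = g Y (q'*D+i)) := by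
  have hk0 : 0 < k := by nlinarith
  rcases le_or_gt (q+1) k with h1 | h1
  · left
    refine ⟨q, by nlinarith, fun i hi => ?_⟩
    have hlt : q*D + i < X.length := by nlinarith
    exact g_append_left hlt
  · have hqk : k ≤ q := by omega
    rcases le_or_gt (q+1) (2*k) with h2 | h2
    · right
      refine ⟨q - k, by nlinarith [Nat.sub_add_cancel hqk], fun i hi => ?_⟩
      have he : q*D + i = X.length + (1 + ((q-k)*D + i)) := by
        have : (q - k) * D + k * D = q * D := by
          rw [← Nat.add_mul, Nat.sub_add_cancel hqk]
        omega
      rw [he, g_append_right]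
      have : (1 + ((q-k)*D + i)) = ((q-k)*D + i) + 1 := by omega
      rw [this, g_cons_succ]
      have hlt : (q-k)*D + i < Y.length := by
        have hle : (q - k) + 1 ≤ k := by omega
        nlinarith [Nat.sub_add_cancel hqk]
      exact g_append_left hlt
    · left
      have hqk2 : 2*k ≤ q := by omega
      have h3 : q + 1 ≤ 3*k := by nlinarith
      refine ⟨q - 2*k, by nlinarith [Nat.sub_add_cancel hqk2], fun i hi => ?_⟩
      have hsplit : (q - 2*k) * D + (2*k) * D = q * D := by
        rw [← Nat.add_mul, Nat.sub_add_cancel hqk2]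
      have h2k : (2*k)*D = k*D + k*D := by ring
      have he : q*D + i = X.length + (1 + (Y.length + (1 + ((q-2*k)*D + i)))) := by omega
      rw [he, g_append_right]
      have e1 : (1 + (Y.length + (1 + ((q-2*k)*D + i)))) = (Y.length + (((q-2*k)*D + i) + 1)) + 1 := by omega
      rw [e1, g_cons_succ, g_append_right, g_cons_succ]


lemma seg : ∀ M n q, n ≤ M → (q+1) * (L w m n + 1) ≤ L w m M + 1 →
    ((∀ i < L w m n, g (A w m M) (q*(L w m n + 1)+i) = g (A w m n) i) ∨
     (∀ i < L w m n, g (A w m M) (q*(L w m n + 1)+i) = g (invrev (A w m n)) i)) ∧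
    ((∀ i < L w m n, g (invrev (A w m M)) (q*(L w m n + 1)+i) = g (A w m n) i) ∨
     (∀ i < L w m n, g (invrev (A w m M)) (q*(L w m n + 1)+i) = g (invrev (A w m n)) i)) := by
  intro M
  induction M with
  | zero =>
    intro n q hn hq
    have hn0 : n = 0 := by omega
    subst hn0
    have hq1 : q + 1 ≤ 1 := Nat.le_of_mul_le_mul_right (le_trans hq (by omega) : (q+1) * (L w m _ + 1) ≤ 1 * (L w m _ + 1)) (by omega)
    have hq0 : q = 0 := by omega
    subst hq0
    exact ⟨Or.inl (by intro i hi; simp), Or.inr (by intro i hi; simp)⟩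
  | succ M ih =>
    intro n q hn hq
    rcases Nat.eq_or_lt_of_le hn with rfl | hlt
    · have hq1 : q + 1 ≤ 1 := Nat.le_of_mul_le_mul_right (le_trans hq (by omega) : (q+1) * (L w m _ + 1) ≤ 1 * (L w m _ + 1)) (by omega)
      have hq0 : q = 0 := by omega
      subst hq0
      exact ⟨Or.inl (by intro i hi; simp), Or.inr (by intro i hi; simp)⟩
    · have hnM : n ≤ M := by omega
      obtain ⟨k, hk0, hk⟩ := L_dvd w m hnM
      have hD : 0 < L w m n + 1 := by omega
      have hq3 : (q+1) * (L w m n + 1) ≤ 3 * (L w m M + 1) := by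
        rw [L_succ] at hq; omega
      have hA : A w m (M+1) = A w m M ++ Letter.b :: (invrev (A w m M) ++ Letter.binv :: A w m M) := rfl
      have hiD : ∀ i, i < L w m n → i + 2 ≤ L w m n + 1 := by omega
      constructor
      · rcases seg_step (A w m M) (invrev (A w m M)) (L w m M) (L w m n + 1) k q rfl (by simp [L]) hD hk hq3 with ⟨q', hq', he⟩ | ⟨q', hq', he⟩
        · rcases (ih n q' hnM hq').1 with h | h
          · exact Or.inl (fun i hi => by rw [hA, he i (hiD i hi)]; exact h i hi)
          · exact Or.inr (fun i hi => by rw [hA, he i (hiD i hi)]; exact h i hi)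
        · rcases (ih n q' hnM hq').2 with h | h
          · exact Or.inl (fun i hi => by rw [hA, he i (hiD i hi)]; exact h i hi)
          · exact Or.inr (fun i hi => by rw [hA, he i (hiD i hi)]; exact h i hi)
      · rcases seg_step (invrev (A w m M)) (A w m M) (L w m M) (L w m n + 1) k q (by simp [L]) rfl hD hk hq3 with ⟨q', hq', he⟩ | ⟨q', hq', he⟩
        · rcases (ih n q' hnM hq').2 with h | h
          · exact Or.inl (fun i hi => by rw [invrev_A_succ, he i (hiD i hi)]; exact h i hi)
          · exact Or.inr (fun i hi => by rw [invrev_A_succ, he i (hiD i hi)]; exact h i hi)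
        · rcases (ih n q' hnM hq').1 with h | h
          · exact Or.inl (fun i hi => by rw [invrev_A_succ, he i (hiD i hi)]; exact h i hi)
          · exact Or.inr (fun i hi => by rw [invrev_A_succ, he i (hiD i hi)]; exact h i hi)


/-- Limit value at nonnegative position `s`. -/
def pos (s : ℕ) : Letter := g (A w m s) s

lemma pos_eq (hm1 : 1 ≤ m) {n s : ℕ} (hs : s < L w m n) : g (A w m n) s = pos w m s := by
  rcases le_total n s with h | h
  · rw [pos, gA_stable w m h hs]
  · rw [pos, gA_stable w m h (by have := L_ge w m hm1 s; omega)]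

/-- The quasi-periodic labelling. -/
def rho (t : ℤ) : Letter :=
  if 0 ≤ t then pos w m t.toNat
  else if t = -1 then Letter.b
  else (pos w m (-t - 2).toNat).inv

lemma rho_coe (s : ℕ) : rho w m s = pos w m s := by simp [rho]

lemma rho_neg1 : rho w m (-1) = Letter.b := by simp [rho]

lemma rho_neg (s : ℕ) : rho w m (-2 - s) = (pos w m s).inv := by
  have h1 : ¬ (0 ≤ (-2 - s : ℤ)) := by omega
  have h2 : (-2 - (s:ℤ)) ≠ -1 := by omega
  have h3 : (-(-2 - (s:ℤ)) - 2).toNat = s := by omega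
  unfold rho; rw [if_neg h1, if_neg h2, h3]

lemma rho_symm (t : ℤ) (ht : 0 ≤ t) : rho w m (-2 - t) = (rho w m t).inv := by
  obtain ⟨s, rfl⟩ := Int.eq_ofNat_of_zero_le ht
  rw [rho_neg, rho_coe]

lemma rho_negSeg (hm1 : 1 ≤ m) (M : ℕ) {i : ℕ} (hi : i < L w m M) :
    rho w m (-(L w m M : ℤ) - 1 + i) = g (invrev (A w m M)) i := by
  have he : (-(L w m M : ℤ) - 1 + i) = -2 - ((L w m M - 1 - i : ℕ) : ℤ) := by omega
  rw [he, rho_neg, g_invrev (show i < (A w m M).length from hi)]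
  show (pos w m (L w m M - 1 - i)).inv = (g (A w m M) (L w m M - 1 - i)).inv
  rw [pos_eq w m hm1 (show L w m M - 1 - i < L w m M by omega)]

lemma rho_posSeg (hm1 : 1 ≤ m) (M : ℕ) {i : ℕ} (hi : i < L w m M) :
    rho w m (i : ℤ) = g (A w m M) i := by
  rw [rho_coe, pos_eq w m hm1 hi]

/-- Every aligned block of level `n` reads either `A n` or its inverse-reverse. -/
lemma blocks (hm1 : 1 ≤ m) (n : ℕ) (q : ℤ) :
    (∀ i : ℕ, i < L w m n → rho w m (q * ((L w m n : ℤ) + 1) + i) = g (A w m n) i) ∨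
    (∀ i : ℕ, i < L w m n → rho w m (q * ((L w m n : ℤ) + 1) + i) = g (invrev (A w m n)) i) := by
  set M : ℕ := max n ((q.natAbs + 1) * (L w m n + 1)) with hMdef
  have hnM : n ≤ M := le_max_left _ _
  have hLM : (q.natAbs + 1) * (L w m n + 1) ≤ L w m M + 1 := by
    have h1 : (q.natAbs + 1) * (L w m n + 1) ≤ M := le_max_right _ _
    have h2 : M + 1 ≤ L w m M := L_ge w m hm1 M
    omega
  rcases le_or_gt 0 q with hq | hq
  · obtain ⟨qn, hqn⟩ := Int.eq_ofNat_of_zero_le hq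
    have hqle : (qn + 1) * (L w m n + 1) ≤ L w m M + 1 := by
      have : qn = q.natAbs := by omega
      rw [this]; exact hLM
    have hmain := (seg w m M n qn hnM hqle).1
    have key : ∀ i : ℕ, i < L w m n →
        rho w m (q * ((L w m n : ℤ) + 1) + i) = g (A w m M) (qn * (L w m n + 1) + i) := by
      intro i hi
      have harg : q * ((L w m n : ℤ) + 1) + i = ((qn * (L w m n + 1) + i : ℕ) : ℤ) := by
        rw [hqn]; push_cast; ring
      rw [harg, rho_posSeg w m hm1 M (show qn * (L w m n + 1) + i < L w m M by nlinarith)]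
    rcases hmain with h | h
    · exact Or.inl (fun i hi => by rw [key i hi, h i hi])
    · exact Or.inr (fun i hi => by rw [key i hi, h i hi])
  · obtain ⟨k, hk0, hk⟩ := L_dvd w m hnM
    have hDpos : 0 < L w m n + 1 := by omega
    have hqk : q.natAbs + 1 ≤ k := by
      by_contra hcon
      have : k * (L w m n + 1) < (q.natAbs + 1) * (L w m n + 1) :=
        (Nat.mul_lt_mul_right hDpos).mpr (by omega)
      omega
    have hqle : (k - q.natAbs + 1) * (L w m n + 1) ≤ L w m M + 1 := by
      rw [hk]
      exact Nat.mul_le_mul_right _ (by omega)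
    have hmain := (seg w m M n (k - q.natAbs) hnM hqle).2
    have key : ∀ i : ℕ, i < L w m n →
        rho w m (q * ((L w m n : ℤ) + 1) + i)
          = g (invrev (A w m M)) ((k - q.natAbs) * (L w m n + 1) + i) := by
      intro i hi
      have hkD : ((L w m M : ℤ) + 1) = (k : ℤ) * ((L w m n : ℤ) + 1) := by exact_mod_cast hk
      have hqnZ : ((k - q.natAbs : ℕ) : ℤ) = (k : ℤ) + q := by omega
      have harg : q * ((L w m n : ℤ) + 1) + i
          = -(L w m M : ℤ) - 1 + (((k - q.natAbs) * (L w m n + 1) + i : ℕ) : ℤ) := by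
        push_cast
        rw [hqnZ]
        linear_combination hkD
      rw [harg, rho_negSeg w m hm1 M
        (show (k - q.natAbs) * (L w m n + 1) + i < L w m M by nlinarith)]
    rcases hmain with h | h
    · exact Or.inl (fun i hi => by rw [key i hi, h i hi])
    · exact Or.inr (fun i hi => by rw [key i hi, h i hi])


lemma covering (hm1 : 1 ≤ m) (k : ℤ) (l : ℕ) :
    ∃ N p p', p + l < L w m N ∧ p' + l < L w m N ∧
      (∀ i ≤ l, g (A w m N) (p + i) = rho w m (k + i)) ∧
      (∀ i ≤ l, g (invrev (A w m N)) (p' + i) = rho w m (k + i)) := by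
  set M : ℕ := k.natAbs + l + 2 with hMdef
  have hM : M + 1 ≤ L w m M := L_ge w m hm1 M
  set pc : ℕ := (k + L w m M + 1).toNat with hpcdef
  have hpc : (pc : ℤ) = k + L w m M + 1 := by omega
  have hpcl : pc + l ≤ 2 * L w m M := by omega
  have h1 : ∀ i ≤ l, g (invrev (A w m (M+1))) (pc + i) = rho w m (k + i) := by
    intro i hi
    rw [invrev_A_succ]
    rcases lt_trichotomy (pc + i) (L w m M) with hcase | hcase | hcase
    · rw [g_append_left (show pc + i < (invrev (A w m M)).length by rw [invrev_length]; exact hcase)]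
      rw [← rho_negSeg w m hm1 M hcase]
      congr 1
      omega
    · have hk1 : k + (i:ℤ) = -1 := by omega
      rw [hk1, rho_neg1]
      have he : pc + i = (invrev (A w m M)).length + 0 := by
        simp only [invrev_length]
        show pc + i = L w m M + 0
        omega
      rw [he, g_append_right, g_cons_zero]
    · have hjlt : pc + i - L w m M - 1 < L w m M := by omega
      have he : pc + i = (invrev (A w m M)).length + ((pc + i - L w m M - 1) + 1) := by
        simp only [invrev_length]
        show pc + i = L w m M + ((pc + i - L w m M - 1) + 1)
        omega
      rw [he, g_append_right, g_cons_succ,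
        g_append_left (show pc + i - L w m M - 1 < (A w m M).length from hjlt)]
      have hkj : k + (i:ℤ) = ((pc + i - L w m M - 1 : ℕ) : ℤ) := by omega
      rw [hkj, rho_posSeg w m hm1 M hjlt]
  have hL1 : pc + l < L w m (M+1) := by rw [L_succ]; omega
  refine ⟨M + 2, L w m (M+1) + 1 + pc, pc, ?_, ?_, ?_, ?_⟩
  · rw [L_succ w m (M+1)]; omega
  · rw [L_succ w m (M+1)]; omega
  · intro i hi
    have he : L w m (M+1) + 1 + pc + i = (A w m (M+1)).length + ((pc + i) + 1) := by
      show _ = L w m (M+1) + ((pc + i) + 1)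
      omega
    have hstep : g (A w m (M+2)) (L w m (M+1) + 1 + pc + i)
        = g (invrev (A w m (M+1))) (pc + i) := by
      show g (A w m (M+1) ++ Letter.b :: (invrev (A w m (M+1)) ++ Letter.binv :: A w m (M+1))) _ = _
      rw [he, g_append_right, g_cons_succ,
        g_append_left (show pc + i < (invrev (A w m (M+1))).length by rw [invrev_length]; exact lt_of_le_of_lt (by omega : pc + i ≤ pc + l) hL1)]
    rw [hstep, h1 i hi]
  · intro i hi
    have hstep : g (invrev (A w m (M+2))) (pc + i) = g (invrev (A w m (M+1))) (pc + i) := by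
      rw [invrev_A_succ w m (M+1)]
      exact g_append_left (by rw [invrev_length]; exact lt_of_le_of_lt (by omega : pc + i ≤ pc + l) hL1)
    rw [hstep, h1 i hi]

lemma recur (hm1 : 1 ≤ m) (k : ℤ) (l : ℕ) :
    ∃ n : ℕ, ∀ (k' : ℤ) (m' : ℕ), n ≤ m' →
      ∃ j : ℤ, k' ≤ j ∧ j + (l:ℤ) ≤ k' + (m':ℤ) - 1 ∧
        ∀ i : ℕ, i ≤ l → rho w m (j + i) = rho w m (k + i) := by
  obtain ⟨N, p, p', hp, hp', hA, hAi⟩ := covering w m hm1 k l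
  refine ⟨2 * L w m N + 1, fun k' m' hm' => ?_⟩
  have hD : (0:ℤ) < (L w m N : ℤ) + 1 := by omega
  set D : ℤ := (L w m N : ℤ) + 1 with hDdef
  set q : ℤ := k' / D + 1 with hqdef
  have hmod := Int.emod_add_mul_ediv k' D
  have hmn : 0 ≤ k' % D := Int.emod_nonneg k' (by omega)
  have hmx : k' % D < D := Int.emod_lt_of_pos k' hD
  have hqD : q * D = D * (k' / D) + D := by ring
  have hks : k' ≤ q * D ∧ q * D ≤ k' + D := by omega
  have key : ∀ (P : List Letter), (∀ i : ℕ, i < L w m N → rho w m (q * D + i) = g P i) →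
      (∀ i ≤ l, ∀ pp : ℕ, pp + l < L w m N → (∀ i' ≤ l, g P (pp + i') = rho w m (k + i')) →
        rho w m (q * D + pp + i) = rho w m (k + i)) := by
    intro P hP i hi pp hpp hocc
    have harg : q * D + (pp:ℤ) + i = q * D + ((pp + i : ℕ) : ℤ) := by push_cast; ring
    rw [harg, hP (pp + i) (by omega), hocc i hi]
  rcases blocks w m hm1 N q with hb | hb
  · refine ⟨q * D + p, by omega, by omega, fun i hi => ?_⟩
    exact key (A w m N) hb i hi p hp hA
  · refine ⟨q * D + p', by omega, by omega, fun i hi => ?_⟩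
    exact key (invrev (A w m N)) hb i hi p' hp' hAi

lemma invcond (hm1 : 1 ≤ m) (k : ℤ) (l : ℕ) :
    ∃ j : ℤ, ∀ i : ℕ, i ≤ l →
      rho w m (j + i) = (rho w m (k + ((l - i : ℕ) : ℤ))).inv := by
  obtain ⟨n, hn⟩ := recur w m hm1 k l
  obtain ⟨j₀, hj₀, _, hcopy⟩ := hn 0 n le_rfl
  refine ⟨-2 - j₀ - l, fun i hi => ?_⟩
  have h1 : (-2 - j₀ - (l:ℤ)) + i = -2 - (j₀ + ((l - i : ℕ) : ℤ)) := by omega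
  rw [h1, rho_symm w m _ (by omega), hcopy (l - i) (by omega)]

def Alt (u : List Letter) : Prop := ∀ i < u.length,
  (Even i → g u i = Letter.a ∨ g u i = Letter.ainv) ∧
  (Odd i → g u i = Letter.b ∨ g u i = Letter.binv)

lemma alt_invrev {u : List Letter} (hu : Alt u) (hodd : Odd u.length) : Alt (invrev u) := by
  intro i hi
  have hi' : i < u.length := by simpa using hi
  have hlt : u.length - 1 - i < u.length := by omega
  have hmod : u.length % 2 = 1 := Nat.odd_iff.mp hodd
  have hpar : (u.length - 1 - i) % 2 = i % 2 := by omega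
  have hcl := hu _ hlt
  rw [g_invrev hi']
  constructor
  · intro hev
    have hev' : Even (u.length - 1 - i) := by
      rw [Nat.even_iff] at *; omega
    rcases hcl.1 hev' with h | h
    · exact Or.inr (by rw [h]; rfl)
    · exact Or.inl (by rw [h]; rfl)
  · intro hod
    have hod' : Odd (u.length - 1 - i) := by
      rw [Nat.odd_iff] at *; omega
    rcases hcl.2 hod' with h | h
    · exact Or.inr (by rw [h]; rfl)
    · exact Or.inl (by rw [h]; rfl)

lemma alt_glue {u v : List Letter} {c : Letter} (hu : Alt u) (hv : Alt v)
    (hodd : Odd u.length) (hc : c = Letter.b ∨ c = Letter.binv) : Alt (u ++ c :: v) := by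
  intro i hi
  have hmod : u.length % 2 = 1 := Nat.odd_iff.mp hodd
  have hlen : i < u.length + (v.length + 1) := by simpa [Nat.add_comm, Nat.add_assoc, Nat.add_left_comm] using hi
  rcases lt_trichotomy i u.length with h | h | h
  · rw [g_append_left h]; exact hu i h
  · have he : i = u.length + 0 := by omega
    rw [he, g_append_right, g_cons_zero]
    constructor
    · intro hev; rw [Nat.even_iff] at hev; omega
    · intro _; exact hc
  · have hj : i - u.length - 1 < v.length := by omega
    have he : i = u.length + ((i - u.length - 1) + 1) := by omega
    rw [he, g_append_right, g_cons_succ]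
    have hpar : (i - u.length - 1) % 2 = i % 2 := by omega
    have hcl := hv _ hj
    constructor
    · intro hev
      exact hcl.1 (by rw [Nat.even_iff] at *; omega)
    · intro hod
      exact hcl.2 (by rw [Nat.odd_iff] at *; omega)

lemma gA0 {i : ℕ} (hi : i < m) : g (A w m 0) i = w i := by
  show g ((List.range m).map w) i = w i
  rw [g_eq_getElem (by simpa using hi)]
  simp

lemma alt_A (hm : Odd m)
    (hperm : ∀ i < m, (Even i → w i = Letter.a ∨ w i = Letter.ainv) ∧
      (Odd i → w i = Letter.b ∨ w i = Letter.binv)) :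
    ∀ n, Alt (A w m n) := by
  intro n
  induction n with
  | zero =>
    intro i hi
    have him : i < m := by simpa [A] using hi
    rw [gA0 w m him]
    exact hperm i him
  | succ n ih =>
    show Alt (A w m n ++ Letter.b :: (invrev (A w m n) ++ Letter.binv :: A w m n))
    have hodd : Odd (A w m n).length := L_odd w m hm n
    refine alt_glue ih ?_ hodd (Or.inl rfl)
    exact alt_glue (alt_invrev ih hodd) ih (by simpa using hodd) (Or.inr rfl)

lemma labelling (hm : Odd m)
    (hperm : ∀ i < m, (Even i → w i = Letter.a ∨ w i = Letter.ainv) ∧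
      (Odd i → w i = Letter.b ∨ w i = Letter.binv)) :
    IsLabelling (rho w m) := by
  have hm1 : 1 ≤ m := by rw [Nat.odd_iff] at hm; omega
  have halt := alt_A w m hm hperm
  intro t
  by_cases ht : 0 ≤ t
  · obtain ⟨s, rfl⟩ := Int.eq_ofNat_of_zero_le ht
    rw [rho_coe]
    have hsl : s < L w m s := by have := L_ge w m hm1 s; omega
    have hcl := halt s s hsl
    constructor
    · intro hev
      exact hcl.1 ((Int.even_coe_nat s).mp hev)
    · intro hod
      refine hcl.2 ?_
      rw [Int.odd_iff] at hod; rw [Nat.odd_iff]; omega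
  · by_cases ht1 : t = -1
    · subst ht1
      rw [rho_neg1]
      exact ⟨fun hev => by rw [Int.even_iff] at hev; omega, fun _ => Or.inl rfl⟩
    · have hts : t = -2 - (((-t - 2).toNat : ℕ) : ℤ) := by omega
      set s : ℕ := (-t - 2).toNat with hsdef
      rw [hts, rho_neg]
      have hsl : s < L w m s := by have := L_ge w m hm1 s; omega
      have hcl := halt s s hsl
      have hpar : (-2 - (s:ℤ)) % 2 = (s:ℤ) % 2 := by omega
      constructor
      · intro hev
        have hev' : Even s := by
          rw [Int.even_iff] at hev; rw [Nat.even_iff]; omega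
        rcases hcl.1 hev' with h | h
        · exact Or.inr (by show (g (A w m s) s).inv = _; rw [h]; rfl)
        · exact Or.inl (by show (g (A w m s) s).inv = _; rw [h]; rfl)
      · intro hod
        have hod' : Odd s := by
          rw [Int.odd_iff] at hod; rw [Nat.odd_iff]; omega
        rcases hcl.2 hod' with h | h
        · exact Or.inr (by show (g (A w m s) s).inv = _; rw [h]; rfl)
        · exact Or.inl (by show (g (A w m s) s).inv = _; rw [h]; rfl)

end

end QPProof

theorem exists_quasiPeriodic_labelling (m : ℕ) (hm : Odd m) (w : ℕ → Letter)
    (hperm : ∀ i < m, (Even i → w i = Letter.a ∨ w i = Letter.ainv) ∧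
      (Odd i → w i = Letter.b ∨ w i = Letter.binv)) :
    ∃ (ρ : ℤ → Letter) (k : ℤ), QuasiPeriodic ρ ∧ ∀ i : ℕ, i < m → ρ (k + i) = w i := by
  have hm1 : 1 ≤ m := by rw [Nat.odd_iff] at hm; omega
  refine ⟨QPProof.rho w m, 0, ⟨QPProof.labelling w m hm hperm,
    fun k l => QPProof.recur w m hm1 k l, fun k l => QPProof.invcond w m hm1 k l⟩, ?_⟩
  intro i him
  rw [zero_add, QPProof.rho_coe,
    ← QPProof.pos_eq w m hm1 (show i < QPProof.L w m 0 by rw [QPProof.L_zero]; exact him),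
    QPProof.gA0 w m him]
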